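/- Let R be a ring and e(x) = \sum_{i\ge 0} e_i x^i a left semicentral idempotent of the formal power series ring R[[x]]. Then e_0 is a left semicentral idempotent of R, e_0 e_i = e_i for all i \ge 0, e_i e_0 = 0 for all i \ge 1, and e(x) R[[x]] = e_0 R[[x]]. -/

import Mathlib

/-- If `e(x) = ∑ eᵢxⁱ` is a left semicentral idempotent of `R[[x]]`
(i.e. `f·e = e·f·e` for all `f`), then `e₀` is a left semicentral idempotent of `R`,
`e₀eᵢ = eᵢ` for all `i ≥ 0`, `eᵢe₀ = 0` for all `i ≥ 1`, and `e(x)R[[x]] = e₀R[[x]]`. -/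
theorem left_semicentral_idempotent_powerSeries
    {R : Type*} [Ring R] (e : PowerSeries R) (he : e * e = e)
    (hsc : ∀ f : PowerSeries R, f * e = e * f * e) :
    (PowerSeries.coeff 0 e * PowerSeries.coeff 0 e = PowerSeries.coeff 0 e ∧
      ∀ r : R, r * PowerSeries.coeff 0 e
        = PowerSeries.coeff 0 e * r * PowerSeries.coeff 0 e)
    ∧ (∀ i : ℕ, PowerSeries.coeff 0 e * PowerSeries.coeff i e = PowerSeries.coeff i e)
    ∧ (∀ i : ℕ, 1 ≤ i → PowerSeries.coeff i e * PowerSeries.coeff 0 e = 0)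
    ∧ (∀ g : PowerSeries R, (∃ f, g = e * f) ↔
        ∃ f, g = PowerSeries.C (PowerSeries.coeff 0 e) * f) := by
  set E : ℕ → R := fun n => PowerSeries.coeff n e with hE
  have idem : ∀ n, ∑ k ∈ Finset.range (n + 1), E k * E (n - k) = E n := by
    intro n
    have := congrArg (PowerSeries.coeff n) he
    rw [PowerSeries.coeff_mul, Finset.Nat.sum_antidiagonal_eq_sum_range_succ_mk] at this
    exact this
  have semi : ∀ (r : R) (n : ℕ),
      r * E n = ∑ k ∈ Finset.range (n + 1), E k * r * E (n - k) := by
    intro r n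
    have := congrArg (PowerSeries.coeff n) (hsc (PowerSeries.C r))
    rw [PowerSeries.coeff_C_mul, PowerSeries.coeff_mul,
      Finset.Nat.sum_antidiagonal_eq_sum_range_succ_mk] at this
    simpa [PowerSeries.coeff_mul_C] using this
  have e00 : E 0 * E 0 = E 0 := by simpa using idem 0
  have key : ∀ n, (E 0 * E n = E n) ∧ (1 ≤ n → E n * E 0 = 0) := by
    intro n
    induction n using Nat.strong_induction_on with
    | _ n ih =>
      match n with
      | 0 => exact ⟨e00, fun h => absurd h (by omega)⟩
      | (m + 1) =>
        -- step 1 : E (m+1) * E 0 = 0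
        have h1 : E (m + 1) * E 0 = 0 := by
          have hs := semi (E 0) (m + 1)
          rw [Finset.sum_range_succ, Finset.sum_range_succ'] at hs
          have hmid : ∀ k ∈ Finset.range m, E (k + 1) * E 0 * E (m + 1 - (k + 1)) = 0 := by
            intro k hk
            rw [Finset.mem_range] at hk
            rw [(ih (k + 1) (by omega)).2 (by omega), zero_mul]
          rw [Finset.sum_eq_zero hmid] at hs
          simp only [zero_add, add_zero, Nat.sub_self, Nat.sub_zero, e00] at hs
          have hz : E (m + 1) * E 0 * E 0 = 0 := left_eq_add.mp hs
          calc E (m + 1) * E 0 = E (m + 1) * (E 0 * E 0) := by rw [e00]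
            _ = 0 := by rw [← mul_assoc]; exact hz
        -- step 2 : middle terms of idempotent sum vanish
        have hid := idem (m + 1)
        rw [Finset.sum_range_succ, Finset.sum_range_succ'] at hid
        -- hid : (∑ k ∈ range m, E (k+1) * E (m+1-(k+1))) + E 0 * E (m+1) + E (m+1) * E 0 = E (m+1)
        have hmul := congrArg (fun x => E 0 * x) hid
        simp only [Finset.mul_sum, mul_add, Nat.sub_self, Nat.sub_zero] at hmul
        have hmid2 : ∀ k ∈ Finset.range m,
            E 0 * (E (k + 1) * E (m + 1 - (k + 1))) = E (k + 1) * E (m + 1 - (k + 1)) := by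
          intro k hk
          rw [Finset.mem_range] at hk
          rw [← mul_assoc, (ih (k + 1) (by omega)).1]
        rw [Finset.sum_congr rfl hmid2] at hmul
        have h00 : E 0 * (E 0 * E (m + 1)) = E 0 * E (m + 1) := by
          rw [← mul_assoc, e00]
        have hlast : E 0 * (E (m + 1) * E 0) = 0 := by rw [h1, mul_zero]
        rw [h00, hlast, add_zero] at hmul
        -- hmul : ∑ mid + E 0 * E (m+1) = E 0 * E (m+1)
        have hmid0 : ∑ k ∈ Finset.range m, E (k + 1) * E (m + 1 - (k + 1)) = 0 :=
          add_eq_right.mp hmul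
        simp only [Nat.sub_self, Nat.sub_zero] at hid
        rw [hmid0, h1, add_zero, zero_add] at hid
        exact ⟨hid, fun _ => h1⟩
  have hCe : PowerSeries.C (E 0) * e = e := by
    ext n
    rw [PowerSeries.coeff_C_mul]
    exact (key n).1
  have heC : e * PowerSeries.C (E 0) = PowerSeries.C (E 0) := by
    ext n
    rw [PowerSeries.coeff_mul_C]
    match n with
    | 0 => rw [PowerSeries.coeff_zero_C]; exact e00
    | (m + 1) => rw [PowerSeries.coeff_C, if_neg (by omega), (key (m + 1)).2 (by omega)]
  refine ⟨⟨e00, fun r => by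
      have := semi r 0
      rwa [Finset.sum_range_one] at this⟩, fun i => (key i).1, fun i hi => (key i).2 hi,
    fun g => ⟨?_, ?_⟩⟩
  · rintro ⟨f, rfl⟩
    exact ⟨e * f, by rw [← mul_assoc, hCe]⟩
  · rintro ⟨f, rfl⟩
    exact ⟨PowerSeries.C (E 0) * f, by rw [← mul_assoc, heC]⟩
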